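/- If a randomized algorithm A is ε-differentially private and the loss ℓ : Θ × X → ℝ is measurable with 0 ≤ ℓ(θ,x) ≤ 1 for all θ, x, then A is uniform RO-stable with rate e^ε − 1; that is, for all adjacent datasets S, S' ∈ X^m and all x ∈ X, |E_{θ~A(S)} ℓ(θ,x) − E_{θ~A(S')} ℓ(θ,x)| ≤ e^ε − 1. -/
import Mathlib


open MeasureTheory Real

/-- Two datasets of size `m` are adjacent if they differ in at most one entry. -/
def Adjacent {X : Type*} {m : ℕ} (S S' : Fin m → X) : Prop :=
  ∃ i : Fin m, ∀ j : Fin m, j ≠ i → S j = S' j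

lemma adjacent_symm {X : Type*} {m : ℕ} {S S' : Fin m → X} (h : Adjacent S S') :
    Adjacent S' S := by
  obtain ⟨i, hi⟩ := h
  exact ⟨i, fun j hj => (hi j hj).symm⟩

lemma one_sided {Θ : Type*} [MeasurableSpace Θ] (μ ν : Measure Θ)
    (hμ : IsProbabilityMeasure μ) (hν : IsProbabilityMeasure ν)
    (c : ℝ) (hc : 1 ≤ c)
    (hle : ∀ O : Set Θ, MeasurableSet O → μ O ≤ ENNReal.ofReal c * ν O)
    (f : Θ → ℝ) (hf : Measurable f) (h0 : ∀ θ, 0 ≤ f θ) (h1 : ∀ θ, f θ ≤ 1) :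
    (∫ θ, f θ ∂μ) - ∫ θ, f θ ∂ν ≤ c - 1 := by
  have hμle : μ ≤ (ENNReal.ofReal c) • ν := by
    rw [Measure.le_iff]
    intro O hO
    simpa using hle O hO
  have hlint : ∫⁻ θ, ENNReal.ofReal (f θ) ∂μ ≤
      ENNReal.ofReal c * ∫⁻ θ, ENNReal.ofReal (f θ) ∂ν := by
    calc ∫⁻ θ, ENNReal.ofReal (f θ) ∂μ ≤ ∫⁻ θ, ENNReal.ofReal (f θ) ∂((ENNReal.ofReal c) • ν) :=
          lintegral_mono' hμle le_rfl
      _ = ENNReal.ofReal c * ∫⁻ θ, ENNReal.ofReal (f θ) ∂ν := lintegral_smul_measure _ _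
  have hintμ : ∫ θ, f θ ∂μ = (∫⁻ θ, ENNReal.ofReal (f θ) ∂μ).toReal :=
    integral_eq_lintegral_of_nonneg_ae (Filter.Eventually.of_forall h0) hf.aestronglyMeasurable
  have hintν : ∫ θ, f θ ∂ν = (∫⁻ θ, ENNReal.ofReal (f θ) ∂ν).toReal :=
    integral_eq_lintegral_of_nonneg_ae (Filter.Eventually.of_forall h0) hf.aestronglyMeasurable
  have hb1 : ∫⁻ θ, ENNReal.ofReal (f θ) ∂ν ≤ 1 := by
    calc ∫⁻ θ, ENNReal.ofReal (f θ) ∂ν ≤ ∫⁻ _, 1 ∂ν :=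
          lintegral_mono fun θ => by
            exact ENNReal.ofReal_le_one.mpr (h1 θ)
      _ = 1 := by simp
  have hbμ : ∫⁻ θ, ENNReal.ofReal (f θ) ∂μ ≤ 1 := by
    calc ∫⁻ θ, ENNReal.ofReal (f θ) ∂μ ≤ ∫⁻ _, 1 ∂μ :=
          lintegral_mono fun θ => by
            exact ENNReal.ofReal_le_one.mpr (h1 θ)
      _ = 1 := by simp
  set a := ∫⁻ θ, ENNReal.ofReal (f θ) ∂μ
  set b := ∫⁻ θ, ENNReal.ofReal (f θ) ∂ν
  have ha : a ≠ ⊤ := ne_top_of_le_ne_top ENNReal.one_ne_top hbμ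
  have hb : b ≠ ⊤ := ne_top_of_le_ne_top ENNReal.one_ne_top hb1
  rw [hintμ, hintν]
  have hc0 : 0 ≤ c := le_trans zero_le_one hc
  have har : a.toReal ≤ c * b.toReal := by
    have := ENNReal.toReal_mono (by
      exact ENNReal.mul_ne_top ENNReal.ofReal_ne_top hb) hlint
    rwa [ENNReal.toReal_mul, ENNReal.toReal_ofReal hc0] at this
  have hbr : b.toReal ≤ 1 := by
    have := ENNReal.toReal_mono ENNReal.one_ne_top hb1
    simpa using this
  have hbr0 : 0 ≤ b.toReal := ENNReal.toReal_nonneg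
  nlinarith

theorem dp_implies_uniform_RO_stability {X Θ : Type*} [MeasurableSpace X]
    [MeasurableSpace Θ] {m : ℕ}
    (A : (Fin m → X) → Measure Θ) (hprob : ∀ S, IsProbabilityMeasure (A S))
    (ε : ℝ) (hε : 0 ≤ ε)
    (hdp : ∀ S S' : Fin m → X, Adjacent S S' → ∀ O : Set Θ, MeasurableSet O →
      A S O ≤ ENNReal.ofReal (exp ε) * A S' O)
    (ℓ : Θ → X → ℝ) (hmeas : Measurable (Function.uncurry ℓ))
    (h0 : ∀ θ x, 0 ≤ ℓ θ x) (h1 : ∀ θ x, ℓ θ x ≤ 1) :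
    ∀ S S' : Fin m → X, Adjacent S S' → ∀ x : X,
      |(∫ θ, ℓ θ x ∂(A S)) - ∫ θ, ℓ θ x ∂(A S')| ≤ exp ε - 1 := by
  intro S S' hadj x
  have hc : 1 ≤ exp ε := one_le_exp hε
  have hf : Measurable fun θ => ℓ θ x := hmeas.comp (measurable_id.prodMk measurable_const)
  rw [abs_sub_le_iff]
  constructor
  · exact one_sided (A S) (A S') (hprob S) (hprob S') _ hc (hdp S S' hadj) _ hf
      (fun θ => h0 θ x) (fun θ => h1 θ x)
  · exact one_sided (A S') (A S) (hprob S') (hprob S) _ hc (hdp S' S (adjacent_symm hadj)) _ hf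
      (fun θ => h0 θ x) (fun θ => h1 θ x)
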